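/- Let K be a finite extension of ℚ of degree d and let f : ℕ≥1 → K be a multiplicative function such that F(z) = ∑_{n≥1} f(n) z^n ∈ K[[z]] is the power series expansion of a rational function in K(z). Suppose F satisfies ∑_{i=0}^r P_i(z)·F(z)^i = 0 in K[[z]] with P_0, …, P_r ∈ K[z] and P_r ≠ 0. Then there exist polynomials A ∈ K[z] and B ∈ ℚ[z] with B ≠ 0 such that B(z)·F(z) = A(z) in K[[z]], every complex root of B is a root of unity, deg B ≤ d!·deg P_r, and deg A ≤ max_{0≤i≤r−1}(deg P_i) + (r·d! − 1)·deg P_r. -/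

import Mathlib

open Polynomial

namespace RBL

open scoped Classical in
lemma _dummy : True := trivial

set_option maxHeartbeats 1000000

open scoped Classical

variable {k : Type*} [Field k]

lemma eventually_poly (F : PowerSeries k) (N : ℕ)
    (h : ∀ n, N ≤ n → PowerSeries.coeff n F = 0) :
    ∃ a : Polynomial k, (a : PowerSeries k) = F := by
  refine ⟨PowerSeries.trunc N F, ?_⟩
  ext n
  rw [Polynomial.coeff_coe, PowerSeries.coeff_trunc]
  split
  · rfl
  · exact (h n (le_of_not_gt ‹_›)).symm

lemma feq [CharZero k] {γ : k} (p : k[X]) (hγ : γ ≠ 0) :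
    ∃ P : k[X], C γ * P - P.comp (X - 1) = C γ * p := by
  suffices H : ∀ D : ℕ, ∀ p : k[X], p.natDegree ≤ D →
      ∃ P : k[X], C γ * P - P.comp (X - 1) = C γ * p from H p.natDegree p le_rfl
  intro D
  induction D with
  | zero =>
    intro p hp
    rw [Polynomial.eq_C_of_natDegree_le_zero hp]
    set c := p.coeff 0 with hc
    by_cases hγ1 : γ = 1
    · subst hγ1
      refine ⟨C c * X, ?_⟩
      simp only [Polynomial.mul_comp, Polynomial.C_comp, Polynomial.X_comp, Polynomial.C_1]
      ring
    · refine ⟨C (γ * c / (γ - 1)), ?_⟩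
      rw [Polynomial.C_comp, ← Polynomial.C_mul, ← Polynomial.C_sub, ← Polynomial.C_mul]
      congr 1
      have h1 : γ - 1 ≠ 0 := sub_ne_zero.mpr hγ1
      field_simp
  | succ D IH =>
    intro p hp
    by_cases hD : p.natDegree ≤ D
    · exact IH p hD
    have hdeg : p.natDegree = D + 1 := le_antisymm hp (not_le.1 hD)
    set c := p.coeff (D + 1) with hc
    have hmon : ∀ n : ℕ, ((X - 1 : k[X]) ^ n).Monic := fun n => by
      have : (X - 1 : k[X]) = X - C 1 := by rw [Polynomial.C_1]
      rw [this]; exact (monic_X_sub_C 1).pow n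
    have hdn : ∀ n : ℕ, ((X - 1 : k[X]) ^ n).natDegree = n := fun n => by
      have : (X - 1 : k[X]) = X - C 1 := by rw [Polynomial.C_1]
      rw [this, Polynomial.natDegree_pow, Polynomial.natDegree_X_sub_C, mul_one]
    have hcompd : ∀ (e : k) (n : ℕ), ((C e * X ^ n).comp (X - 1)) = C e * (X - 1) ^ n := by
      intro e n
      simp [Polynomial.mul_comp, Polynomial.C_comp, Polynomial.X_comp, Polynomial.pow_comp]
    -- basic facts about (X-1)^n
    have hXm : (X - 1 : k[X]) = X - C 1 := by rw [Polynomial.C_1]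
    have hc1 : ∀ n : ℕ, ((X - 1 : k[X]) ^ n).coeff n = 1 := fun n => by
      have h := (hmon n).coeff_natDegree
      rwa [hdn n] at h
    have hc0 : ∀ n m : ℕ, n < m → ((X - 1 : k[X]) ^ n).coeff m = 0 := fun n m hm => by
      apply Polynomial.coeff_eq_zero_of_natDegree_lt
      rw [hdn n]; exact hm
    -- find P₀ such that the residual has degree ≤ D
    obtain ⟨P₀, hP₀c, hP₀d⟩ : ∃ P₀ : k[X],
        ((C γ * P₀ - P₀.comp (X - 1)).coeff (D + 1) = γ * c) ∧
        (∀ m, D + 1 < m → (C γ * P₀ - P₀.comp (X - 1)).coeff m = 0) := by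
      by_cases hγ1 : γ = 1
      · subst hγ1
        have hD2 : ((D : k) + 2) ≠ 0 := by
          have h := Nat.cast_ne_zero (R := k).mpr (show D + 2 ≠ 0 by omega)
          push_cast at h; exact h
        set e := c / ((D : k) + 2) with he
        refine ⟨C e * X ^ (D + 2), ?_, ?_⟩
        · rw [hcompd, Polynomial.coeff_sub, Polynomial.coeff_C_mul, Polynomial.coeff_C_mul,
            Polynomial.coeff_C_mul, Polynomial.coeff_X_pow]
          have hb : ((X - 1 : k[X]) ^ (D + 2)).coeff (D + 1) = -((D : k) + 2) := by
            rw [hXm, show (X - C 1 : k[X]) = X + C (-1) by rw [map_neg]; ring,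
              Polynomial.coeff_X_add_C_pow]
            rw [show D + 2 - (D + 1) = 1 by omega, Nat.choose_succ_self_right]
            push_cast; ring
          rw [hb, if_neg (by omega)]
          rw [he]
          field_simp
          ring
        · intro m hm
          rw [hcompd, Polynomial.coeff_sub, Polynomial.coeff_C_mul, Polynomial.coeff_C_mul,
            Polynomial.coeff_C_mul, Polynomial.coeff_X_pow]
          rcases Nat.lt_or_ge m (D + 2) with h | h
          · omega
          · rcases Nat.eq_or_lt_of_le h with h2 | h2
            · rw [← h2, if_pos rfl, hc1]
              ring
            · rw [if_neg (by omega), hc0 _ _ h2]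
              ring
      · set e := γ * c / (γ - 1) with he
        have h1 : γ - 1 ≠ 0 := sub_ne_zero.mpr hγ1
        refine ⟨C e * X ^ (D + 1), ?_, ?_⟩
        · rw [hcompd, Polynomial.coeff_sub, ← mul_assoc, ← Polynomial.C_mul,
            Polynomial.coeff_C_mul, Polynomial.coeff_C_mul, Polynomial.coeff_X_pow,
            if_pos rfl, hc1]
          rw [he]
          field_simp
        · intro m hm
          rw [hcompd, Polynomial.coeff_sub, ← mul_assoc, ← Polynomial.C_mul,
            Polynomial.coeff_C_mul, Polynomial.coeff_C_mul, Polynomial.coeff_X_pow,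
            if_neg (by omega), hc0 _ _ hm]
          ring
    set Φ := C γ * P₀ - P₀.comp (X - 1) with hΦ
    have hres : (C γ * p - Φ).natDegree ≤ D := by
      rw [Polynomial.natDegree_le_iff_coeff_eq_zero]
      intro m hm
      rcases Nat.lt_or_ge (D + 1) m with h | h
      · rw [Polynomial.coeff_sub, hP₀d m h, sub_zero]
        apply Polynomial.coeff_eq_zero_of_natDegree_lt
        calc (C γ * p).natDegree ≤ p.natDegree := Polynomial.natDegree_C_mul_le _ _
          _ < m := by omega
      · have hm1 : m = D + 1 := by omega
        subst hm1
        rw [Polynomial.coeff_sub, hP₀c, Polynomial.coeff_C_mul, ← hc, sub_self]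
    obtain ⟨P₁, hP₁⟩ := IH (C γ⁻¹ * (C γ * p - Φ)) (le_trans (Polynomial.natDegree_C_mul_le _ _) hres)
    refine ⟨P₀ + P₁, ?_⟩
    have h2 : C γ * (C γ⁻¹ * (C γ * p - Φ)) = C γ * p - Φ := by
      rw [← mul_assoc, ← Polynomial.C_mul, mul_inv_cancel₀ hγ, Polynomial.C_1, one_mul]
    rw [h2] at hP₁
    rw [mul_add, Polynomial.add_comp]
    rw [hΦ] at hP₁
    linear_combination hP₁

lemma dsum [CharZero k] {γ : k} (hγ : γ ≠ 0) (p : k[X]) :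
    ∃ P : k[X], ∀ N n : ℕ, N ≤ n →
      ∑ j ∈ Finset.Ioc N n, p.eval (j : k) * γ ^ j
        = P.eval (n : k) * γ ^ n - P.eval (N : k) * γ ^ N := by
  obtain ⟨P, hP⟩ := feq p hγ
  refine ⟨P, ?_⟩
  have key : ∀ j : ℕ, 1 ≤ j →
      p.eval (j : k) * γ ^ j = P.eval (j : k) * γ ^ j - P.eval ((j - 1 : ℕ) : k) * γ ^ (j - 1) := by
    intro j hj
    have h1 := congrArg (fun q : k[X] => q.eval ((j : ℕ) : k)) hP
    simp only [Polynomial.eval_sub, Polynomial.eval_mul, Polynomial.eval_C,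
      Polynomial.eval_comp, Polynomial.eval_X, Polynomial.eval_one] at h1
    have hcast : ((j : k) - 1) = ((j - 1 : ℕ) : k) := by
      rw [Nat.cast_sub hj, Nat.cast_one]
    rw [hcast] at h1
    have h2 : γ ^ j = γ * γ ^ (j - 1) := by
      conv_lhs => rw [show j = (j - 1) + 1 by omega]
      rw [pow_succ]; ring
    calc p.eval (j : k) * γ ^ j = (γ * p.eval (j : k)) * γ ^ (j - 1) := by rw [h2]; ring
      _ = (γ * P.eval (j : k) - P.eval ((j - 1 : ℕ) : k)) * γ ^ (j - 1) := by rw [h1]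
      _ = P.eval (j : k) * γ ^ j - P.eval ((j - 1 : ℕ) : k) * γ ^ (j - 1) := by rw [h2]; ring
  intro N n hNn
  induction n, hNn using Nat.le_induction with
  | base => simp
  | succ n hn IH =>
    rw [Finset.sum_Ioc_succ_top hn, IH, key (n + 1) (by omega)]
    simp only [Nat.add_sub_cancel]
    push_cast
    ring

lemma expind [CharZero k] :
    ∀ (D : ℕ) (T : Finset k) (p : k → k[X]) (N : ℕ),
      (∑ β ∈ T, (if p β = 0 then 0 else (p β).natDegree + 1)) = D →
      (∀ β ∈ T, β ≠ 0) →
      (∀ n : ℕ, N ≤ n → ∑ β ∈ T, (p β).eval (n : k) * β ^ n = 0) →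
      ∀ β ∈ T, p β = 0 := by
  intro D
  induction D using Nat.strong_induction_on with
  | _ D IH =>
    intro T p N hD h0 hsum
    by_contra hcon
    push_neg at hcon
    obtain ⟨γ, hγT, hγ0⟩ := hcon
    by_cases hsingle : ∀ β ∈ T, p β ≠ 0 → β = γ
    · -- single nonzero term
      have hone : ∀ n : ℕ, N ≤ n → (p γ).eval (n : k) * γ ^ n = 0 := by
        intro n hn
        have h := hsum n hn
        rwa [Finset.sum_eq_single γ (fun β hβ hne => by
          by_cases hpz : p β = 0
          · rw [hpz]; simp
          · exact absurd (hsingle β hβ hpz) hne) (fun h => absurd hγT h)] at h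
      have hzero : ∀ n : ℕ, N ≤ n → (p γ).eval ((n : ℕ) : k) = 0 := by
        intro n hn
        have := hone n hn
        have hγn : (γ : k) ^ n ≠ 0 := pow_ne_zero _ (h0 γ hγT)
        exact (mul_eq_zero.mp this).resolve_right hγn
      apply hγ0
      apply Polynomial.eq_zero_of_infinite_isRoot
      apply Set.Infinite.mono (s := (fun n : ℕ => (n : k)) '' Set.Ici N)
      · rintro x ⟨n, hn, rfl⟩
        exact hzero n hn
      · exact Set.Infinite.image
          (Set.injOn_of_injective Nat.cast_injective)
          (Set.Ici_infinite N)
    · push_neg at hsingle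
      obtain ⟨δ, hδT, hδ0, hδγ⟩ := hsingle
      -- apply the difference operator Δ_δ
      set p' : k → k[X] := fun β => C β * (p β).comp (X + 1) - C δ * p β with hp'
      have heval : ∀ (β : k) (n : ℕ),
          (p' β).eval (n : k) = β * (p β).eval ((n + 1 : ℕ) : k) - δ * (p β).eval (n : k) := by
        intro β n
        simp only [hp', Polynomial.eval_sub, Polynomial.eval_mul, Polynomial.eval_C,
          Polynomial.eval_comp, Polynomial.eval_add, Polynomial.eval_X, Polynomial.eval_one]
        push_cast
        ring
      have hsum' : ∀ n : ℕ, N ≤ n → ∑ β ∈ T, (p' β).eval (n : k) * β ^ n = 0 := by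
        intro n hn
        have e1 := hsum (n + 1) (by omega)
        have e2 := hsum n hn
        calc ∑ β ∈ T, (p' β).eval (n : k) * β ^ n
            = ∑ β ∈ T, ((p β).eval ((n + 1 : ℕ) : k) * β ^ (n + 1)
                - δ * ((p β).eval ((n : ℕ) : k) * β ^ n)) := by
              apply Finset.sum_congr rfl
              intro β hβ
              rw [heval]
              rw [pow_succ]
              ring
          _ = 0 := by
              rw [Finset.sum_sub_distrib, e1, ← Finset.mul_sum, e2]
              ring
      -- degree facts
      have hcompdeg : ∀ q : k[X], (q.comp (X + 1)).natDegree = q.natDegree := by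
        intro q
        rw [Polynomial.natDegree_comp]
        have : (X + 1 : k[X]) = X + C 1 := by rw [Polynomial.C_1]
        rw [this, Polynomial.natDegree_X_add_C, mul_one]
      have hcomplc : ∀ q : k[X], (q.comp (X + 1)).coeff q.natDegree = q.leadingCoeff := by
        intro q
        by_cases hq : q.natDegree = 0
        · rw [Polynomial.eq_C_of_natDegree_le_zero hq.le]
          simp
        · have h1 : (q.comp (X + 1)).coeff q.natDegree = (q.comp (X + 1)).leadingCoeff := by
            rw [← hcompdeg q]; rfl
          rw [h1]
          have : (X + 1 : k[X]) = X + C 1 := by rw [Polynomial.C_1]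
          rw [Polynomial.leadingCoeff_comp (by rw [this, Polynomial.natDegree_X_add_C]; omega)]
          rw [this, Polynomial.leadingCoeff_X_add_C, one_pow, mul_one]
      have hmeasle : ∀ β ∈ T, (if p' β = 0 then 0 else (p' β).natDegree + 1)
          ≤ (if p β = 0 then 0 else (p β).natDegree + 1) := by
        intro β hβ
        by_cases hpz : p β = 0
        · have : p' β = 0 := by rw [hp']; simp [hpz]
          simp [this, hpz]
        · by_cases hpz' : p' β = 0
          · simp [hpz', hpz]
          · simp only [if_neg hpz, if_neg hpz']
            have : (p' β).natDegree ≤ (p β).natDegree := by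
              rw [hp']
              refine le_trans (Polynomial.natDegree_sub_le _ _) ?_
              simp only [max_le_iff]
              exact ⟨le_trans (Polynomial.natDegree_C_mul_le _ _) (hcompdeg (p β)).le,
                Polynomial.natDegree_C_mul_le _ _⟩
            omega
      have hmeaslt : (if p' δ = 0 then 0 else (p' δ).natDegree + 1)
          < (if p δ = 0 then 0 else (p δ).natDegree + 1) := by
        rw [if_neg hδ0]
        by_cases hpz' : p' δ = 0
        · simp [hpz']
        · rw [if_neg hpz']
          have hd : (p' δ).natDegree < (p δ).natDegree := by
            set q := p δ with hq
            set D' := q.natDegree with hD'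
            have hsub : p' δ = C δ * (q.comp (X + 1) - q) := by
              rw [hp']; ring
            have hcd : (q.comp (X + 1) - q).coeff D' = 0 := by
              rw [Polynomial.coeff_sub, hcomplc q]
              rw [Polynomial.leadingCoeff]
              ring
            have hle : (q.comp (X + 1) - q).natDegree ≤ D' := by
              refine le_trans (Polynomial.natDegree_sub_le _ _) ?_
              simp [hcompdeg q]
              exact hD'.ge
            have hne : q.comp (X + 1) - q ≠ 0 := by
              intro h
              apply hpz'
              rw [hsub, h, mul_zero]
            have hlt : (q.comp (X + 1) - q).natDegree < D' := by
              rcases Nat.lt_or_ge (q.comp (X + 1) - q).natDegree D' with h | h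
              · exact h
              · exfalso
                have : (q.comp (X + 1) - q).natDegree = D' := le_antisymm hle h
                have h2 := Polynomial.leadingCoeff_ne_zero.mpr hne
                rw [Polynomial.leadingCoeff, this, hcd] at h2
                exact h2 rfl
            calc (p' δ).natDegree ≤ (q.comp (X + 1) - q).natDegree := by
                  rw [hsub]; exact Polynomial.natDegree_C_mul_le _ _
              _ < D' := hlt
          omega
      have hlt : (∑ β ∈ T, (if p' β = 0 then 0 else (p' β).natDegree + 1)) < D := by
        rw [← hD]
        exact Finset.sum_lt_sum hmeasle ⟨δ, hδT, hmeaslt⟩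
      have := IH _ hlt T p' N rfl h0 hsum' γ hγT
      -- but p' γ ≠ 0
      apply hγ0
      by_contra hpγ
      have hd : (p' γ).coeff (p γ).natDegree = (γ - δ) * (p γ).leadingCoeff := by
        rw [hp']
        simp only [Polynomial.coeff_sub, Polynomial.coeff_C_mul]
        rw [hcomplc (p γ)]
        rw [Polynomial.leadingCoeff]
        ring
      rw [this] at hd
      simp only [Polynomial.coeff_zero] at hd
      have h1 : γ - δ ≠ 0 := sub_ne_zero.mpr hδγ.symm
      have h2 : (p γ).leadingCoeff ≠ 0 := Polynomial.leadingCoeff_ne_zero.mpr hpγ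
      exact (mul_ne_zero h1 h2) hd.symm

lemma exprep [CharZero k] (L : Multiset k) :
    ∀ (F : PowerSeries k) (a : k[X]),
    (∀ α ∈ L, α ≠ 0) →
    (((L.map (fun α => (1 : k[X]) - C α * X)).prod : k[X]) : PowerSeries k) * F
      = (a : PowerSeries k) →
    ∃ (T : Finset k) (p : k → k[X]) (N : ℕ), (∀ β ∈ T, β ≠ 0) ∧
      ∀ n, N ≤ n → PowerSeries.coeff n F = ∑ β ∈ T, (p β).eval (n : k) * β ^ n := by
  induction L using Multiset.induction with
  | empty =>
    intro F a _ hF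
    simp only [Multiset.map_zero, Multiset.prod_zero, Polynomial.coe_one, one_mul] at hF
    refine ⟨∅, fun _ => 0, a.natDegree + 1, by simp, ?_⟩
    intro n hn
    rw [hF, Polynomial.coeff_coe]
    rw [Polynomial.coeff_eq_zero_of_natDegree_lt (by omega)]
    simp
  | cons α L IH =>
    intro F a hL hF
    have hα : α ≠ 0 := hL α (Multiset.mem_cons_self _ _)
    have hL' : ∀ β ∈ L, β ≠ 0 := fun β hβ => hL β (Multiset.mem_cons_of_mem hβ)
    rw [Multiset.map_cons, Multiset.prod_cons, Polynomial.coe_mul] at hF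
    set G := ((1 - C α * X : k[X]) : PowerSeries k) * F with hG
    have hF' : (((L.map (fun α => (1:k[X]) - C α * X)).prod : k[X]) : PowerSeries k) * G
        = (a : PowerSeries k) := by
      rw [hG]
      linear_combination hF
    obtain ⟨T, p, N, h0, hrep⟩ := IH G a hL' hF'
    have hcoe : ((1 - C α * X : k[X]) : PowerSeries k)
        = 1 - (PowerSeries.C α) * PowerSeries.X := by
      rw [Polynomial.coe_sub, Polynomial.coe_mul, Polynomial.coe_one,
        Polynomial.coe_C, Polynomial.coe_X]
    have hGc : ∀ n : ℕ, PowerSeries.coeff (n+1) G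
        = PowerSeries.coeff (n+1) F - α * PowerSeries.coeff n F := by
      intro n
      rw [hG, hcoe, sub_mul, one_mul, map_sub]
      congr 1
      rw [mul_assoc, PowerSeries.coeff_C_mul, PowerSeries.coeff_succ_X_mul]
    have hFn : ∀ t : ℕ, PowerSeries.coeff (N + t) F
        = α ^ t * PowerSeries.coeff N F
          + ∑ j ∈ Finset.Ioc N (N + t), α ^ (N + t - j) * PowerSeries.coeff j G := by
      intro t
      induction t with
      | zero => simp
      | succ t IHt =>
        have hrec : PowerSeries.coeff (N + t + 1) F
            = α * PowerSeries.coeff (N + t) F + PowerSeries.coeff (N + t + 1) G := by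
          linear_combination (-1 : k) * hGc (N + t)
        have hidx : N + (t + 1) = (N + t) + 1 := by ring
        rw [hidx, hrec, IHt, Finset.sum_Ioc_succ_top (show N ≤ N + t by omega)]
        have hS : α * ∑ j ∈ Finset.Ioc N (N + t), α ^ (N + t - j) * PowerSeries.coeff j G
            = ∑ j ∈ Finset.Ioc N (N + t), α ^ (N + t + 1 - j) * PowerSeries.coeff j G := by
          rw [Finset.mul_sum]
          apply Finset.sum_congr rfl
          intro j hj
          have hj' : j ≤ N + t := (Finset.mem_Ioc.mp hj).2
          rw [show N + t + 1 - j = (N + t - j) + 1 by omega, pow_succ']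
          ring
        rw [← hS]
        rw [show N + t + 1 - (N + t + 1) = 0 by omega, pow_zero, one_mul, pow_succ]
        ring
    -- antiderivatives
    have hPch : ∀ β : k, ∃ Pb : k[X], β ∈ T → ∀ N' n' : ℕ, N' ≤ n' →
        ∑ j ∈ Finset.Ioc N' n', (p β).eval (j : k) * (β * α⁻¹) ^ j
          = Pb.eval (n' : k) * (β * α⁻¹) ^ n' - Pb.eval (N' : k) * (β * α⁻¹) ^ N' := by
      intro β
      by_cases hβ : β ∈ T
      · obtain ⟨P, hP⟩ := dsum (mul_ne_zero (h0 β hβ) (inv_ne_zero hα)) (p β)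
        exact ⟨P, fun _ => hP⟩
      · exact ⟨0, fun h => absurd h hβ⟩
    choose Pf hPf using hPch
    set Ctot : k := PowerSeries.coeff N F * (α ^ N)⁻¹
      - ∑ β ∈ T, (Pf β).eval (N : k) * (β * α⁻¹) ^ N with hCtot
    have hmain : ∀ n, N ≤ n → PowerSeries.coeff n F
        = (∑ β ∈ T, (Pf β).eval (n : k) * β ^ n) + Ctot * α ^ n := by
      intro n hn
      obtain ⟨t, rfl⟩ : ∃ t, n = N + t := ⟨n - N, by omega⟩
      rw [hFn t]
      have hstep : ∑ j ∈ Finset.Ioc N (N + t), α ^ (N + t - j) * PowerSeries.coeff j G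
          = ∑ β ∈ T, α ^ (N + t) *
              ((Pf β).eval ((N + t : ℕ) : k) * (β * α⁻¹) ^ (N + t)
                - (Pf β).eval ((N : ℕ) : k) * (β * α⁻¹) ^ N) := by
        rw [Finset.sum_congr rfl (fun j hj => by
          have hjN : N ≤ j := le_of_lt (Finset.mem_Ioc.mp hj).1
          rw [hrep j hjN, Finset.mul_sum])]
        rw [Finset.sum_comm]
        apply Finset.sum_congr rfl
        intro β hβ
        rw [← hPf β hβ N (N + t) (by omega), Finset.mul_sum]
        apply Finset.sum_congr rfl
        intro j hj
        have hj' : j ≤ N + t := (Finset.mem_Ioc.mp hj).2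
        rw [pow_sub₀ α hα hj', mul_pow, inv_pow]
        ring
      rw [hstep]
      have hβpow : ∀ β : k, α ^ (N + t) * (β * α⁻¹) ^ (N + t) = β ^ (N + t) := by
        intro β
        rw [mul_pow, inv_pow]
        field_simp
      have hαt : α ^ t = α ^ (N + t) * (α ^ N)⁻¹ := by
        field_simp [pow_add]
        ring
      rw [hCtot, hαt]
      rw [Finset.sum_congr rfl (fun β hβ => show
          α ^ (N + t) * ((Pf β).eval ((N + t : ℕ) : k) * (β * α⁻¹) ^ (N + t)
            - (Pf β).eval ((N : ℕ) : k) * (β * α⁻¹) ^ N)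
          = (Pf β).eval ((N + t : ℕ) : k) * β ^ (N + t)
            - (Pf β).eval ((N : ℕ) : k) * (β * α⁻¹) ^ N * α ^ (N + t) from by
        linear_combination ((Pf β).eval ((N + t : ℕ) : k)) * hβpow β)]
      rw [Finset.sum_sub_distrib, ← Finset.sum_mul]
      ring
    -- assemble
    refine ⟨insert α T, fun β =>
      (if β ∈ T then Pf β else 0) + (if β = α then C Ctot else 0), N, ?_, ?_⟩
    · intro β hβ
      rcases Finset.mem_insert.mp hβ with h | h
      · rw [h]; exact hα
      · exact h0 β h
    · intro n hn
      rw [hmain n hn]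
      have hterm : ∀ β ∈ insert α T,
          (((if β ∈ T then Pf β else 0) + (if β = α then C Ctot else 0)).eval (n : k)) * β ^ n
          = (if β ∈ T then (Pf β).eval (n : k) * β ^ n else 0)
            + (if β = α then Ctot * β ^ n else 0) := by
        intro β hβ
        by_cases h2 : β = α
        · subst h2
          by_cases h1 : β ∈ T <;>
            simp only [h1, if_true, if_false, if_pos rfl, Polynomial.eval_add,
              Polynomial.eval_C, Polynomial.eval_zero] <;> ring
        · by_cases h1 : β ∈ T <;>
            simp only [h1, h2, if_true, if_false, Polynomial.eval_add,
              Polynomial.eval_C, Polynomial.eval_zero] <;> ring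
      rw [Finset.sum_congr rfl hterm, Finset.sum_add_distrib]
      rw [Finset.sum_ite_mem, Finset.inter_eq_right.mpr (Finset.subset_insert α T)]
      rw [Finset.sum_ite_eq' (insert α T) α (fun β => Ctot * β ^ n),
        if_pos (Finset.mem_insert_self α T)]

lemma annih_step [CharZero k] (α : k) (p : k[X]) :
    ((1 - C α * X : k[X]) : PowerSeries k) * PowerSeries.mk (fun n => p.eval (n : k) * α ^ n)
      = PowerSeries.mk (fun n => (p - p.comp (X - 1)).eval (n : k) * α ^ n)
        + (PowerSeries.C) (p.eval (-1)) := by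
  have hcoe : ((1 - C α * X : k[X]) : PowerSeries k)
      = 1 - (PowerSeries.C α) * PowerSeries.X := by
    rw [Polynomial.coe_sub, Polynomial.coe_mul, Polynomial.coe_one,
      Polynomial.coe_C, Polynomial.coe_X]
  rw [hcoe]
  ext n
  rw [sub_mul, one_mul, map_sub, map_add, mul_assoc, PowerSeries.coeff_C_mul,
    PowerSeries.coeff_C, PowerSeries.coeff_mk]
  cases n with
  | zero =>
    rw [PowerSeries.coeff_zero_X_mul, if_pos rfl, PowerSeries.coeff_mk]
    simp only [Polynomial.eval_sub, Polynomial.eval_comp, Polynomial.eval_X,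
      Polynomial.eval_one, Nat.cast_zero, pow_zero]
    ring
  | succ n =>
    rw [PowerSeries.coeff_succ_X_mul, if_neg (by omega), PowerSeries.coeff_mk,
      PowerSeries.coeff_mk]
    simp only [Polynomial.eval_sub, Polynomial.eval_comp, Polynomial.eval_X,
      Polynomial.eval_one]
    have hcast : ((n + 1 : ℕ) : k) - 1 = (n : k) := by push_cast; ring
    rw [hcast, pow_succ]
    ring

lemma annih [CharZero k] (α : k) (p : k[X]) :
    ∃ e : k[X],
      (((1 - C α * X) ^ (p.natDegree + 1) : k[X]) : PowerSeries k) *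
        PowerSeries.mk (fun n => p.eval (n : k) * α ^ n) = (e : PowerSeries k) := by
  suffices H : ∀ D : ℕ, ∀ p : k[X], p.natDegree ≤ D →
      ∃ e : k[X], (((1 - C α * X) ^ (D + 1) : k[X]) : PowerSeries k) *
        PowerSeries.mk (fun n => p.eval (n : k) * α ^ n) = (e : PowerSeries k) from
    H p.natDegree p le_rfl
  intro D
  induction D with
  | zero =>
    intro p hp
    refine ⟨C (p.coeff 0), ?_⟩
    have hpc : p = C (p.coeff 0) := Polynomial.eq_C_of_natDegree_le_zero hp
    rw [pow_one, annih_step]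
    have hq : p - p.comp (X - 1) = 0 := by
      rw [hpc]; simp [Polynomial.C_comp]
    rw [hq]
    have : (PowerSeries.mk fun n => (0 : k[X]).eval (n : k) * α ^ n) = 0 := by
      ext n; simp
    rw [this, zero_add, Polynomial.coe_C]
    congr 1
    rw [hpc]; simp [Polynomial.eval_C]
  | succ D IH =>
    intro p hp
    set q := p - p.comp (X - 1) with hqdef
    have hmon : ∀ n : ℕ, ((X - 1 : k[X]) ^ n).Monic := fun n => by
      have h : (X - 1 : k[X]) = X - C 1 := by rw [Polynomial.C_1]
      rw [h]; exact (monic_X_sub_C 1).pow n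
    have hcompdeg : (p.comp (X - 1)).natDegree = p.natDegree := by
      rw [Polynomial.natDegree_comp]
      have h : (X - 1 : k[X]) = X - C 1 := by rw [Polynomial.C_1]
      rw [h, Polynomial.natDegree_X_sub_C, mul_one]
    have hcomplc : (p.comp (X - 1)).coeff p.natDegree = p.leadingCoeff := by
      by_cases hz : p.natDegree = 0
      · rw [Polynomial.eq_C_of_natDegree_le_zero hz.le]
        simp [Polynomial.C_comp, Polynomial.leadingCoeff, hz]
      · have h1 : (p.comp (X - 1)).coeff p.natDegree = (p.comp (X - 1)).leadingCoeff := by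
          rw [← hcompdeg]; rfl
        rw [h1]
        have h : (X - 1 : k[X]) = X - C 1 := by rw [Polynomial.C_1]
        rw [Polynomial.leadingCoeff_comp (by rw [h, Polynomial.natDegree_X_sub_C]; omega)]
        rw [h, Polynomial.leadingCoeff_X_sub_C, one_pow, mul_one]
    have hqdeg : q.natDegree ≤ D := by
      rw [Polynomial.natDegree_le_iff_coeff_eq_zero]
      intro m hm
      rcases Nat.lt_or_ge (p.natDegree) m with h | h
      · rw [hqdef, Polynomial.coeff_sub,
          Polynomial.coeff_eq_zero_of_natDegree_lt h,
          Polynomial.coeff_eq_zero_of_natDegree_lt (by rw [hcompdeg]; exact h), sub_zero]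
      · have hm1 : m = p.natDegree := by omega
        subst hm1
        rw [hqdef, Polynomial.coeff_sub, hcomplc, Polynomial.leadingCoeff, sub_self]
    obtain ⟨e₁, he₁⟩ := IH q hqdeg
    refine ⟨e₁ + (1 - C α * X) ^ (D + 1) * C (p.eval (-1)), ?_⟩
    have hps : (((1 - C α * X) ^ (D + 1 + 1) : k[X]) : PowerSeries k)
        = (((1 - C α * X) ^ (D + 1) : k[X]) : PowerSeries k)
          * ((1 - C α * X : k[X]) : PowerSeries k) := by
      rw [← Polynomial.coe_mul, ← pow_succ]
    rw [hps, mul_assoc, annih_step, mul_add, ← hqdef, he₁]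
    rw [Polynomial.coe_add, Polynomial.coe_mul, Polynomial.coe_C]

lemma core [CharZero k] (f : ℕ → k)
    (hmul : ∀ q n : ℕ, Nat.Prime q → ¬ q ∣ n → f (q * n) = f q * f n)
    (T : Finset k) (h0 : ∀ β ∈ T, β ≠ 0) (p : k → k[X]) (hp : ∀ β ∈ T, p β ≠ 0)
    (N : ℕ) (hrep : ∀ n, N ≤ n → f n = ∑ β ∈ T, (p β).eval (n : k) * β ^ n) :
    ∀ a ∈ T, ∃ m : ℕ, 1 ≤ m ∧ a ^ m = 1 := by
  classical
  set M : ℕ := T.sup (fun a => T.sup (fun b => orderOf (a * b⁻¹))) with hM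
  obtain ⟨q, hqge, hq⟩ := Nat.exists_infinite_primes (N + M + 2)
  have hq2 : 2 ≤ q := hq.two_le
  have hqM : M < q := by omega
  have hqN : N < q := by omega
  have hqk : ((q : k)) ≠ 0 := Nat.cast_ne_zero.mpr (by omega)
  -- injectivity of q-power maps on T
  have hinj : ∀ (e : ℕ), 0 < e → ∀ a ∈ T, ∀ b ∈ T, a ^ (q ^ e) = b ^ (q ^ e) → a = b := by
    intro e he a ha b hb hab
    have hb0 : b ≠ 0 := h0 b hb
    have h1 : (a * b⁻¹) ^ (q ^ e) = 1 := by
      rw [mul_pow, inv_pow, hab]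
      exact mul_inv_cancel₀ (pow_ne_zero _ hb0)
    have h2 : orderOf (a * b⁻¹) ∣ q ^ e := orderOf_dvd_of_pow_eq_one h1
    obtain ⟨j, hj, hoj⟩ := (Nat.dvd_prime_pow hq).mp h2
    have h3 : orderOf (a * b⁻¹) ≤ M := by
      calc orderOf (a * b⁻¹) ≤ T.sup (fun b => orderOf (a * b⁻¹)) :=
            Finset.le_sup (f := fun b => orderOf (a * b⁻¹)) hb
        _ ≤ M := by
          rw [hM]
          exact Finset.le_sup (f := fun a => T.sup fun b => orderOf (a * b⁻¹)) ha
    rw [hoj] at h3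
    have hj0 : j = 0 := by
      by_contra hj0
      have : q ≤ q ^ j := Nat.le_self_pow hj0 q
      omega
    rw [hj0, pow_zero] at hoj
    have h4 : a * b⁻¹ = 1 := orderOf_eq_one_iff.mp hoj
    exact (mul_inv_eq_one₀ hb0).mp h4
  have hinj1 : ∀ a ∈ T, ∀ b ∈ T, a ^ q = b ^ q → a = b := by
    intro a ha b hb hab
    exact hinj 1 (by omega) a ha b hb (by rwa [pow_one])
  have hinj2 : ∀ a ∈ T, ∀ b ∈ T, a ^ (q * q) = b ^ (q * q) → a = b := by
    intro a ha b hb hab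
    exact hinj 2 (by omega) a ha b hb (by rwa [pow_two])
  -- the key step
  have key : ∀ a ∈ T, ∃ b ∈ T, b ^ q = a ^ (q * q) := by
    intro a ha
    set U : Finset k := T.image (fun x => x ^ (q * q)) ∪ T.image (fun x => x ^ q) with hU
    set Pt : k → k[X] := fun u =>
      (∑ x ∈ T.filter (fun x => x ^ (q * q) = u),
        C (x ^ q) * ((p x).comp (C ((q : k) * (q : k)) * X + C (q : k))))
      - (∑ x ∈ T.filter (fun x => x ^ q = u),
        C (f q * x) * ((p x).comp (C (q : k) * X + C 1))) with hPt
    have hU0 : ∀ u ∈ U, u ≠ 0 := by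
      intro u hu
      rcases Finset.mem_union.mp hu with h | h <;>
      · obtain ⟨x, hx, rfl⟩ := Finset.mem_image.mp h
        exact pow_ne_zero _ (h0 x hx)
    have hsum : ∀ t : ℕ, N ≤ t → ∑ u ∈ U, (Pt u).eval (t : k) * u ^ t = 0 := by
      intro t ht
      have hn1 : N ≤ 1 + q * t := by
        calc N ≤ t := ht
          _ ≤ q * t := Nat.le_mul_of_pos_left t (by omega)
          _ ≤ 1 + q * t := by omega
      have hn2 : N ≤ q * (1 + q * t) := by
        calc N ≤ 1 + q * t := hn1
          _ ≤ q * (1 + q * t) := Nat.le_mul_of_pos_left _ (by omega)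
      have hcop : ¬ q ∣ (1 + q * t) := by
        intro hdvd
        have h1 : q ∣ q * t := ⟨t, rfl⟩
        have h2 : q ∣ 1 := (Nat.dvd_add_right h1).mp (by rwa [Nat.add_comm] at hdvd)
        have h3 := Nat.le_of_dvd one_pos h2
        omega
      have e1 := hrep (q * (1 + q * t)) hn2
      have e2 := hrep (1 + q * t) hn1
      have e3 := hmul q (1 + q * t) hq hcop
      have hexp1 : ∑ u ∈ U, (∑ x ∈ T.filter (fun x => x ^ (q * q) = u),
            C (x ^ q) * ((p x).comp (C ((q : k) * (q : k)) * X + C (q : k)))).eval (t : k) * u ^ t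
          = ∑ x ∈ T, (p x).eval ((q * (1 + q * t) : ℕ) : k) * x ^ (q * (1 + q * t)) := by
        have hmapsto : ∀ x ∈ T, x ^ (q * q) ∈ U := fun x hx =>
          Finset.mem_union_left _ (Finset.mem_image_of_mem _ hx)
        rw [← Finset.sum_fiberwise_of_maps_to hmapsto
          (fun x => (p x).eval ((q * (1 + q * t) : ℕ) : k) * x ^ (q * (1 + q * t)))]
        apply Finset.sum_congr rfl
        intro u hu
        rw [Polynomial.eval_finset_sum, Finset.sum_mul]
        apply Finset.sum_congr rfl
        intro x hx
        obtain ⟨hxT, hxu⟩ := Finset.mem_filter.mp hx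
        rw [← hxu]
        simp only [Polynomial.eval_mul, Polynomial.eval_C, Polynomial.eval_comp,
          Polynomial.eval_add, Polynomial.eval_mul, Polynomial.eval_X, Polynomial.eval_one]
        have hcast : ((q * (1 + q * t) : ℕ) : k) = (q : k) * (q : k) * (t : k) + (q : k) := by
          push_cast; ring
        have hpow : x ^ (q * (1 + q * t)) = x ^ q * (x ^ (q * q)) ^ t := by
          rw [← pow_mul, ← pow_add]
          congr 1
          ring
        rw [hcast, hpow]
        ring
      have hexp2 : ∑ u ∈ U, (∑ x ∈ T.filter (fun x => x ^ q = u),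
            C (f q * x) * ((p x).comp (C (q : k) * X + C 1))).eval (t : k) * u ^ t
          = f q * ∑ x ∈ T, (p x).eval ((1 + q * t : ℕ) : k) * x ^ (1 + q * t) := by
        have hmapsto : ∀ x ∈ T, x ^ q ∈ U := fun x hx =>
          Finset.mem_union_right _ (Finset.mem_image_of_mem _ hx)
        rw [Finset.mul_sum, ← Finset.sum_fiberwise_of_maps_to hmapsto
          (fun x => f q * ((p x).eval ((1 + q * t : ℕ) : k) * x ^ (1 + q * t)))]
        apply Finset.sum_congr rfl
        intro u hu
        rw [Polynomial.eval_finset_sum, Finset.sum_mul]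
        apply Finset.sum_congr rfl
        intro x hx
        obtain ⟨hxT, hxu⟩ := Finset.mem_filter.mp hx
        rw [← hxu]
        simp only [Polynomial.eval_mul, Polynomial.eval_C, Polynomial.eval_comp,
          Polynomial.eval_add, Polynomial.eval_mul, Polynomial.eval_X, Polynomial.eval_one]
        have hcast : ((1 + q * t : ℕ) : k) = (q : k) * (t : k) + 1 := by
          push_cast; ring
        have hpow : x ^ (1 + q * t) = x * (x ^ q) ^ t := by
          rw [← pow_mul, ← pow_succ']
          congr 1
          ring
        rw [hcast, hpow]
        ring
      have hsplit : ∑ u ∈ U, (Pt u).eval (t : k) * u ^ t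
          = (∑ u ∈ U, (∑ x ∈ T.filter (fun x => x ^ (q * q) = u),
              C (x ^ q) * ((p x).comp (C ((q : k) * (q : k)) * X + C (q : k)))).eval (t : k) * u ^ t)
            - ∑ u ∈ U, (∑ x ∈ T.filter (fun x => x ^ q = u),
              C (f q * x) * ((p x).comp (C (q : k) * X + C 1))).eval (t : k) * u ^ t := by
        rw [← Finset.sum_sub_distrib]
        apply Finset.sum_congr rfl
        intro u hu
        rw [hPt]
        simp only [Polynomial.eval_sub]
        ring
      rw [hsplit, hexp1, hexp2, ← e1, ← e2, e3]
      ring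
    have hall := expind _ U Pt N rfl hU0 hsum
    have hPta := hall (a ^ (q * q)) (Finset.mem_union_left _ (Finset.mem_image_of_mem _ ha))
    have hfil1 : T.filter (fun x => x ^ (q * q) = a ^ (q * q)) = {a} := by
      ext x
      simp only [Finset.mem_filter, Finset.mem_singleton]
      constructor
      · rintro ⟨hx, he⟩
        exact hinj2 x hx a ha he
      · rintro rfl
        exact ⟨ha, rfl⟩
    by_contra hno
    push_neg at hno
    have hfil2 : T.filter (fun x => x ^ q = a ^ (q * q)) = ∅ := by
      rw [Finset.filter_eq_empty_iff]
      intro x hx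
      exact hno x hx
    rw [hPt] at hPta
    simp only [hfil1, hfil2, Finset.sum_singleton, Finset.sum_empty, sub_zero] at hPta
    -- contradiction: this product is nonzero
    have hlin : (C ((q : k) * (q : k)) * X + C (q : k)).natDegree = 1 :=
      Polynomial.natDegree_linear (mul_ne_zero hqk hqk)
    have hcomp0 : (p a).comp (C ((q : k) * (q : k)) * X + C (q : k)) ≠ 0 := by
      intro hz
      have hlc := Polynomial.leadingCoeff_comp (p := p a)
        (q := C ((q : k) * (q : k)) * X + C (q : k)) (by rw [hlin]; omega)
      rw [hz] at hlc
      simp only [Polynomial.leadingCoeff_zero] at hlc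
      have h1 : (p a).leadingCoeff ≠ 0 := Polynomial.leadingCoeff_ne_zero.mpr (hp a ha)
      have h2 : (C ((q : k) * (q : k)) * X + C (q : k)).leadingCoeff = (q : k) * (q : k) := by
        exact Polynomial.leadingCoeff_linear (mul_ne_zero hqk hqk)
      rw [h2] at hlc
      exact (mul_ne_zero h1 (pow_ne_zero _ (mul_ne_zero hqk hqk))) hlc.symm
    have hC0 : (C (a ^ q) : k[X]) ≠ 0 := by
      simp only [ne_eq, Polynomial.C_eq_zero]
      exact pow_ne_zero _ (h0 a ha)
    exact (mul_ne_zero hC0 hcomp0) hPta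
  -- pigeonhole
  intro a ha
  set W : Finset k := T.image (fun x => x ^ q) with hW
  have hWstep : ∀ w ∈ W, w ^ q ∈ W := by
    intro w hw
    obtain ⟨b, hb, rfl⟩ := Finset.mem_image.mp hw
    obtain ⟨c, hc, hcq⟩ := key b hb
    have h1 : (b ^ q) ^ q = c ^ q := by rw [← pow_mul, ← hcq]
    rw [h1]
    exact Finset.mem_image_of_mem _ hc
  have hmem : ∀ j : ℕ, a ^ (q ^ (j + 1)) ∈ W := by
    intro j
    induction j with
    | zero => rw [pow_one]; exact Finset.mem_image_of_mem _ ha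
    | succ j IHj =>
      have h1 : a ^ (q ^ (j + 2)) = (a ^ (q ^ (j + 1))) ^ q := by
        rw [← pow_mul, ← pow_succ]
      rw [h1]
      exact hWstep _ IHj
  obtain ⟨i, j, hij, hEq⟩ := Finite.exists_ne_map_eq_of_infinite
    (fun j : ℕ => (⟨a ^ (q ^ (j + 1)), hmem j⟩ : {x // x ∈ W}))
  have hEq' : a ^ (q ^ (i + 1)) = a ^ (q ^ (j + 1)) := by
    simpa [Subtype.ext_iff] using hEq
  have ha0 : a ≠ 0 := h0 a ha
  have main : ∀ A B : ℕ, A < B → a ^ A = a ^ B → ∃ m : ℕ, 1 ≤ m ∧ a ^ m = 1 := by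
    intro A B hAB hpow
    refine ⟨B - A, by omega, ?_⟩
    have h1 : a ^ (B - A) * a ^ A = a ^ B := pow_sub_mul_pow a (le_of_lt hAB)
    rw [← hpow] at h1
    have h2 : a ^ A ≠ 0 := pow_ne_zero _ ha0
    calc a ^ (B - A) = a ^ (B - A) * a ^ A * (a ^ A)⁻¹ := by field_simp
      _ = a ^ A * (a ^ A)⁻¹ := by rw [h1]
      _ = 1 := mul_inv_cancel₀ h2
  rcases lt_or_gt_of_ne hij with h | h
  · exact main _ _ (Nat.pow_lt_pow_right hq.one_lt (by omega)) hEq'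
  · exact main _ _ (Nat.pow_lt_pow_right hq.one_lt (by omega)) hEq'.symm

lemma lift (K : Type*) [Field K] [Algebra ℚ K] [FiniteDimensional ℚ K] (b : Polynomial K)
    (hb : b.Monic)
    (hroots : ∀ ζ : AlgebraicClosure K,
      (b.map (algebraMap K (AlgebraicClosure K))).IsRoot ζ → ∃ m : ℕ, 1 ≤ m ∧ ζ ^ m = 1) :
    ∃ B : Polynomial ℚ, B.Monic ∧ b ∣ B.map (algebraMap ℚ K) ∧
      (∀ z : ℂ, (B.map (algebraMap ℚ ℂ)).IsRoot z → ∃ m : ℕ, 1 ≤ m ∧ z ^ m = 1) ∧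
      B.natDegree ≤ Module.finrank ℚ K * b.natDegree := by
  haveI hKchar : CharZero K := charZero_of_injective_algebraMap (algebraMap ℚ K).injective
  haveI hΩchar : CharZero (AlgebraicClosure K) :=
    charZero_of_injective_algebraMap (algebraMap K (AlgebraicClosure K)).injective
  haveI : IsScalarTower ℚ K (AlgebraicClosure K) :=
    IsScalarTower.of_algebraMap_eq' (RingHom.ext_rat _ _)
  suffices H : ∀ n : ℕ, ∀ b : Polynomial K, b.natDegree ≤ n → b.Monic →
      (∀ ζ : AlgebraicClosure K,
        (b.map (algebraMap K (AlgebraicClosure K))).IsRoot ζ → ∃ m : ℕ, 1 ≤ m ∧ ζ ^ m = 1) →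
      ∃ B : Polynomial ℚ, B.Monic ∧ b ∣ B.map (algebraMap ℚ K) ∧
        (∀ z : ℂ, (B.map (algebraMap ℚ ℂ)).IsRoot z → ∃ m : ℕ, 1 ≤ m ∧ z ^ m = 1) ∧
        B.natDegree ≤ Module.finrank ℚ K * b.natDegree from
    H b.natDegree b le_rfl hb hroots
  intro n
  induction n with
  | zero =>
    intro b hdeg hmon _
    have hb1 : b = 1 := (hmon.natDegree_eq_zero).mp (by omega)
    refine ⟨1, monic_one, by rw [hb1, Polynomial.map_one], ?_, by simp⟩
    intro z hz
    exfalso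
    rw [Polynomial.IsRoot, Polynomial.map_one, Polynomial.eval_one] at hz
    exact one_ne_zero hz
  | succ n IH =>
    intro b hdeg hmon hroots'
    by_cases hz : b.natDegree = 0
    · have hb1 : b = 1 := (hmon.natDegree_eq_zero).mp hz
      refine ⟨1, monic_one, by rw [hb1, Polynomial.map_one], ?_, by simp⟩
      intro z hz'
      exfalso
      rw [Polynomial.IsRoot, Polynomial.map_one, Polynomial.eval_one] at hz'
      exact one_ne_zero hz'
    · set ι := algebraMap K (AlgebraicClosure K) with hι
      have hbne : b ≠ 0 := hmon.ne_zero
      have hbΩne : b.map ι ≠ 0 := Polynomial.map_ne_zero hbne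
      have hmapdeg : (b.map ι).natDegree = b.natDegree :=
        Polynomial.natDegree_map_eq_of_injective (ι.injective) b
      have hdegne : (b.map ι).degree ≠ 0 := by
        rw [Polynomial.degree_eq_natDegree hbΩne]
        simp only [ne_eq, Nat.cast_eq_zero]
        omega
      obtain ⟨ζ, hζ⟩ := IsAlgClosed.exists_root (b.map ι) hdegne
      have haev : (Polynomial.aeval ζ) b = 0 := by
        rw [Polynomial.aeval_def, ← Polynomial.eval_map]
        exact hζ
      have hint : IsIntegral K ζ := ⟨b, hmon, haev⟩
      set g := minpoly K ζ with hg
      have hgmon : g.Monic := minpoly.monic hint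
      have hgdvd : g ∣ b := minpoly.dvd K ζ haev
      obtain ⟨b₁, hb₁⟩ := hgdvd
      have hb₁mon : b₁.Monic := hgmon.of_mul_monic_left (hb₁ ▸ hmon)
      have hdegsum : b.natDegree = g.natDegree + b₁.natDegree := by
        rw [hb₁, Polynomial.natDegree_mul hgmon.ne_zero hb₁mon.ne_zero]
      have hgpos : 0 < g.natDegree := minpoly.natDegree_pos hint
      have hb₁roots : ∀ ζ' : AlgebraicClosure K,
          (b₁.map ι).IsRoot ζ' → ∃ m : ℕ, 1 ≤ m ∧ ζ' ^ m = 1 := by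
        intro ζ' hζ'
        apply hroots' ζ'
        apply hζ'.dvd
        rw [hb₁, Polynomial.map_mul]
        exact Dvd.intro_left _ rfl
      obtain ⟨B₁, hB₁mon, hB₁dvd, hB₁roots, hB₁deg⟩ := IH b₁ (by omega) hb₁mon hb₁roots
      -- the minimal polynomial of ζ over ℚ
      set E := IntermediateField.adjoin K ({ζ} : Set (AlgebraicClosure K)) with hE
      haveI : FiniteDimensional K E := IntermediateField.adjoin.finiteDimensional hint
      haveI hEchar : CharZero E := charZero_of_injective_algebraMap (algebraMap K E).injective
      haveI : IsScalarTower ℚ K E := IsScalarTower.of_algebraMap_eq' (RingHom.ext_rat _ _)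
      haveI : FiniteDimensional ℚ E := FiniteDimensional.trans ℚ K E
      haveI : IsScalarTower ℚ E (AlgebraicClosure K) :=
        IsScalarTower.of_algebraMap_eq' (RingHom.ext_rat _ _)
      have hEdim : Module.finrank ℚ E = Module.finrank ℚ K * g.natDegree := by
        rw [← IntermediateField.adjoin.finrank hint]
        exact (Module.finrank_mul_finrank ℚ K E).symm
      set x' := IntermediateField.AdjoinSimple.gen K ζ with hx'
      have hζeq : algebraMap E (AlgebraicClosure K) x' = ζ :=
        IntermediateField.AdjoinSimple.algebraMap_gen K ζ
      have hxint : IsIntegral ℚ x' := IsIntegral.of_finite ℚ x'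
      have hζℚ : IsIntegral ℚ ζ := by
        rw [← hζeq]
        exact hxint.algebraMap
      set h := minpoly ℚ ζ with hh
      have hhmon : h.Monic := minpoly.monic hζℚ
      have hhdvdmap : g ∣ h.map (algebraMap ℚ K) := minpoly.dvd_map_of_isScalarTower ℚ K ζ
      have hhdeg : h.natDegree ≤ Module.finrank ℚ E := by
        rw [hh, ← hζeq, minpoly.algebraMap_eq (algebraMap E (AlgebraicClosure K)).injective]
        exact minpoly.natDegree_le x'
      obtain ⟨m, hm1, hm⟩ := hroots' ζ hζ
      have hhdvdXm : h ∣ (X ^ m - 1 : Polynomial ℚ) := by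
        apply minpoly.dvd ℚ ζ
        rw [map_sub, map_pow, Polynomial.aeval_X, map_one, hm, sub_self]
      refine ⟨h * B₁, hhmon.mul hB₁mon, ?_, ?_, ?_⟩
      · rw [Polynomial.map_mul, hb₁]
        exact mul_dvd_mul hhdvdmap hB₁dvd
      · intro z hzr
        rw [Polynomial.IsRoot, Polynomial.map_mul, Polynomial.eval_mul] at hzr
        rcases mul_eq_zero.mp hzr with hcase | hcase
        · have hdvd2 : (h.map (algebraMap ℚ ℂ)) ∣ ((X ^ m - 1 : Polynomial ℚ).map (algebraMap ℚ ℂ)) :=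
            Polynomial.map_dvd _ hhdvdXm
          have hzr2 : ((X ^ m - 1 : Polynomial ℚ).map (algebraMap ℚ ℂ)).IsRoot z :=
            Polynomial.IsRoot.dvd hcase hdvd2
          rw [Polynomial.map_sub, Polynomial.map_pow, Polynomial.map_X, Polynomial.map_one,
            Polynomial.IsRoot, Polynomial.eval_sub, Polynomial.eval_pow, Polynomial.eval_X,
            Polynomial.eval_one, sub_eq_zero] at hzr2
          exact ⟨m, hm1, hzr2⟩
        · exact hB₁roots z hcase
      · have hBdeg : (h * B₁).natDegree = h.natDegree + B₁.natDegree :=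
          Polynomial.natDegree_mul hhmon.ne_zero hB₁mon.ne_zero
        have hsum : Module.finrank ℚ K * b.natDegree
            = Module.finrank ℚ K * g.natDegree + Module.finrank ℚ K * b₁.natDegree := by
          rw [hdegsum]; ring
        omega

lemma reduce (K : Type*) [Field K] (F : PowerSeries K)
    (hF1 : PowerSeries.coeff 1 F = 1)
    (hC0 : PowerSeries.constantCoeff F = 0)
    (hrat : ∃ a b : Polynomial K, b ≠ 0 ∧ (b : PowerSeries K) * F = (a : PowerSeries K))
    (r : ℕ) (P : ℕ → Polynomial K) (hPr : P r ≠ 0)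
    (heq : ∑ i ∈ Finset.range (r + 1), (P i : PowerSeries K) * F ^ i = 0) :
    ∃ a₀ b₀ : Polynomial K, b₀.Monic ∧ IsCoprime a₀ b₀ ∧
      (b₀ : PowerSeries K) * F = (a₀ : PowerSeries K) ∧ a₀ ≠ 0 ∧ b₀.coeff 0 ≠ 0 ∧
      b₀ ∣ P r ∧ ∃ j, j < r ∧ P j ≠ 0 ∧ a₀ ∣ P j := by
  classical
  have hFne : F ≠ 0 := by
    intro h
    rw [h] at hF1
    simp at hF1
  -- minimal-degree denominator
  have hexists : ∃ n : ℕ, ∃ b : Polynomial K, b ≠ 0 ∧ b.natDegree = n ∧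
      ∃ a : Polynomial K, (b : PowerSeries K) * F = (a : PowerSeries K) := by
    obtain ⟨a, b, hbne, hab⟩ := hrat
    exact ⟨b.natDegree, b, hbne, rfl, a, hab⟩
  obtain ⟨b', hb'ne, hb'deg, a', hab'⟩ := Nat.find_spec hexists
  have hcop' : IsCoprime a' b' := by
    apply EuclideanDomain.isCoprime_of_dvd
    · rintro ⟨ha0, hb0⟩
      exact hb'ne hb0
    · intro z hznonunit hz0 hza hzb
      obtain ⟨a₁, rfl⟩ := hza
      obtain ⟨b₁, rfl⟩ := hzb
      have hb₁ne : b₁ ≠ 0 := fun h => hb'ne (by rw [h, mul_zero])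
      have hzps : ((z : Polynomial K) : PowerSeries K) ≠ 0 := by
        rw [ne_eq, Polynomial.coe_eq_zero_iff]
        exact hz0
      have hcanc : (b₁ : PowerSeries K) * F = (a₁ : PowerSeries K) := by
        apply mul_left_cancel₀ hzps
        rw [Polynomial.coe_mul, Polynomial.coe_mul] at hab'
        rw [← mul_assoc]
        exact hab'
      have hzdeg : 1 ≤ z.natDegree := by
        by_contra hzd
        apply hznonunit
        have hzc : z = C (z.coeff 0) := Polynomial.eq_C_of_natDegree_le_zero (by omega)
        rw [hzc, Polynomial.isUnit_C]
        apply isUnit_iff_ne_zero.mpr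
        intro hc
        apply hz0
        rw [hzc, hc, map_zero]
      have hlt : b₁.natDegree < Nat.find hexists := by
        have : (z * b₁).natDegree = z.natDegree + b₁.natDegree :=
          Polynomial.natDegree_mul hz0 hb₁ne
        omega
      exact Nat.find_min hexists hlt ⟨b₁, hb₁ne, rfl, a₁, hcanc⟩
  -- monicize
  have hune : b'.leadingCoeff ≠ 0 := Polynomial.leadingCoeff_ne_zero.mpr hb'ne
  set b₀ := b' * C b'.leadingCoeff⁻¹ with hb₀
  set a₀ := a' * C b'.leadingCoeff⁻¹ with ha₀
  have hmon : b₀.Monic := Polynomial.monic_mul_leadingCoeff_inv hb'ne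
  have hab₀ : (b₀ : PowerSeries K) * F = (a₀ : PowerSeries K) := by
    rw [hb₀, ha₀, Polynomial.coe_mul, Polynomial.coe_mul]
    rw [mul_comm ((b' : PowerSeries K)) _, mul_assoc, hab']
    ring
  have hcop : IsCoprime a₀ b₀ := by
    obtain ⟨x, y, hxy⟩ := hcop'
    refine ⟨C b'.leadingCoeff * x, C b'.leadingCoeff * y, ?_⟩
    rw [hb₀, ha₀]
    calc C b'.leadingCoeff * x * (a' * C b'.leadingCoeff⁻¹)
          + C b'.leadingCoeff * y * (b' * C b'.leadingCoeff⁻¹)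
        = (C b'.leadingCoeff * C b'.leadingCoeff⁻¹) * (x * a' + y * b') := by ring
      _ = 1 := by
          rw [← Polynomial.C_mul, mul_inv_cancel₀ hune, Polynomial.C_1, one_mul, hxy]
  have hb₀ne : b₀ ≠ 0 := hmon.ne_zero
  have ha₀ne : a₀ ≠ 0 := by
    intro h
    rw [h] at hab₀
    have : (b₀ : PowerSeries K) = 0 ∨ F = 0 := mul_eq_zero.mp (by rw [hab₀]; simp)
    rcases this with h1 | h1
    · exact hb₀ne (Polynomial.coe_eq_zero_iff.mp h1)
    · exact hFne h1
  -- the polynomial identity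
  set Q : Polynomial K := ∑ i ∈ Finset.range (r + 1), P i * a₀ ^ i * b₀ ^ (r - i) with hQ
  have hQ0 : Q = 0 := by
    rw [← Polynomial.coe_eq_zero_iff]
    have hcoe_sum : ((Q : Polynomial K) : PowerSeries K)
        = ∑ i ∈ Finset.range (r + 1),
            ((P i : PowerSeries K) * (a₀ : PowerSeries K) ^ i * (b₀ : PowerSeries K) ^ (r - i)) := by
      rw [hQ, ← Polynomial.coeToPowerSeries.ringHom_apply, map_sum]
      refine Finset.sum_congr rfl fun i _ => ?_
      rw [map_mul, map_mul, map_pow, map_pow]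
      rfl
    rw [hcoe_sum]
    have hterm : ∀ i ∈ Finset.range (r + 1),
        (P i : PowerSeries K) * (a₀ : PowerSeries K) ^ i * (b₀ : PowerSeries K) ^ (r - i)
          = (b₀ : PowerSeries K) ^ r * ((P i : PowerSeries K) * F ^ i) := by
      intro i hi
      have hir : i ≤ r := by
        have := Finset.mem_range.mp hi
        omega
      rw [← hab₀, mul_pow]
      rw [show (b₀ : PowerSeries K) ^ r = (b₀ : PowerSeries K) ^ i * (b₀ : PowerSeries K) ^ (r - i) from
        (pow_mul_pow_sub _ hir).symm]
      ring
    rw [Finset.sum_congr rfl hterm, ← Finset.mul_sum, heq, mul_zero]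
  -- the minimal index
  have hexj : ∃ i : ℕ, P i ≠ 0 := ⟨r, hPr⟩
  set j := Nat.find hexj with hj
  have hjne : P j ≠ 0 := Nat.find_spec hexj
  have hjler : j ≤ r := Nat.find_min' hexj hPr
  have hjmin : ∀ i, i < j → P i = 0 := by
    intro i hi
    have := Nat.find_min hexj hi
    simpa using this
  have hQ1 : ∑ i ∈ Finset.Ico j (r + 1), P i * a₀ ^ i * b₀ ^ (r - i) = 0 := by
    rw [← hQ0, hQ]
    apply Finset.sum_subset
    · intro i hi
      rw [Finset.mem_Ico] at hi
      rw [Finset.mem_range]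
      omega
    · intro i hi hni
      rw [Finset.mem_range] at hi
      have hij : i < j := by
        rcases Nat.lt_or_ge i j with h | h
        · exact h
        · exact absurd (Finset.mem_Ico.mpr ⟨h, by omega⟩) hni
      rw [hjmin i hij]
      ring
  have hQ2 : a₀ ^ j * (∑ i ∈ Finset.Ico j (r + 1), P i * a₀ ^ (i - j) * b₀ ^ (r - i)) = 0 := by
    rw [Finset.mul_sum, ← hQ1]
    apply Finset.sum_congr rfl
    intro i hi
    have hij : j ≤ i := (Finset.mem_Ico.mp hi).1
    rw [show a₀ ^ i = a₀ ^ j * a₀ ^ (i - j) from by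
      rw [← pow_add]; congr 1; omega]
    ring
  have hQ3 : ∑ i ∈ Finset.Ico j (r + 1), P i * a₀ ^ (i - j) * b₀ ^ (r - i) = 0 :=
    (mul_eq_zero.mp hQ2).resolve_left (pow_ne_zero _ ha₀ne)
  have hjr : j < r := by
    rcases Nat.lt_or_ge j r with h | h
    · exact h
    · exfalso
      have hjr' : j = r := by omega
      subst hjr'
      rw [show Finset.Ico j (j + 1) = {j} from by
        rw [Finset.Ico_add_one_right_eq_Icc, Finset.Icc_self]] at hQ3
      simp only [Finset.sum_singleton, Nat.sub_self, pow_zero, mul_one] at hQ3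
      exact hjne hQ3
  -- a₀ ∣ P j
  have hadvd : a₀ ∣ P j := by
    have hsplit := Finset.sum_eq_sum_Ico_succ_bot (show j < r + 1 by omega)
      (fun i => P i * a₀ ^ (i - j) * b₀ ^ (r - i))
    rw [hsplit] at hQ3
    rw [Nat.sub_self, pow_zero, mul_one] at hQ3
    have htail : ∑ i ∈ Finset.Ico (j + 1) (r + 1), P i * a₀ ^ (i - j) * b₀ ^ (r - i)
        = a₀ * ∑ i ∈ Finset.Ico (j + 1) (r + 1), P i * a₀ ^ (i - j - 1) * b₀ ^ (r - i) := by
      rw [Finset.mul_sum]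
      apply Finset.sum_congr rfl
      intro i hi
      have hij : j + 1 ≤ i := (Finset.mem_Ico.mp hi).1
      rw [show a₀ ^ (i - j) = a₀ * a₀ ^ (i - j - 1) from by
        rw [← pow_succ']; congr 1; omega]
      ring
    rw [htail] at hQ3
    have : P j * b₀ ^ (r - j) = a₀ * (-(∑ i ∈ Finset.Ico (j + 1) (r + 1),
        P i * a₀ ^ (i - j - 1) * b₀ ^ (r - i))) := by linear_combination hQ3
    have hdvd : a₀ ∣ P j * b₀ ^ (r - j) := Dvd.intro _ this.symm
    exact (hcop.pow_right).dvd_of_dvd_mul_right hdvd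
  -- b₀ ∣ P r
  have hbdvd : b₀ ∣ P r := by
    have hsplit := Finset.sum_range_succ (fun i => P i * a₀ ^ i * b₀ ^ (r - i)) r
    rw [hQ] at hQ0
    rw [hsplit] at hQ0
    rw [Nat.sub_self, pow_zero, mul_one] at hQ0
    have hhead : ∑ i ∈ Finset.range r, P i * a₀ ^ i * b₀ ^ (r - i)
        = b₀ * ∑ i ∈ Finset.range r, P i * a₀ ^ i * b₀ ^ (r - i - 1) := by
      rw [Finset.mul_sum]
      apply Finset.sum_congr rfl
      intro i hi
      have hir : i < r := Finset.mem_range.mp hi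
      rw [show b₀ ^ (r - i) = b₀ * b₀ ^ (r - i - 1) from by
        rw [← pow_succ']; congr 1; omega]
      ring
    rw [hhead] at hQ0
    have : P r * a₀ ^ r = b₀ * (-(∑ i ∈ Finset.range r, P i * a₀ ^ i * b₀ ^ (r - i - 1))) := by
      linear_combination hQ0
    have hdvd : b₀ ∣ P r * a₀ ^ r := Dvd.intro _ this.symm
    exact (hcop.symm.pow_right).dvd_of_dvd_mul_right hdvd
  -- constant coefficient of b₀ is nonzero
  have hb₀c0 : b₀.coeff 0 ≠ 0 := by
    intro hc0'
    have hXb : X ∣ b₀ := Polynomial.X_dvd_iff.mpr hc0'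
    have ha0' : a₀.coeff 0 = 0 := by
      have h1 := congrArg (PowerSeries.constantCoeff) hab₀
      rw [map_mul, hC0, mul_zero] at h1
      have h2 : PowerSeries.constantCoeff (a₀ : PowerSeries K) = a₀.coeff 0 := by
        rw [← PowerSeries.coeff_zero_eq_constantCoeff_apply, Polynomial.coeff_coe]
      rw [h2] at h1
      exact h1.symm
    have hXa : X ∣ a₀ := Polynomial.X_dvd_iff.mpr ha0'
    exact Polynomial.not_isUnit_X (hcop.isUnit_of_dvd' hXa hXb)
  exact ⟨a₀, b₀, hmon, hcop, hab₀, ha₀ne, hb₀c0, hbdvd, j, hjr, hjne, hadvd⟩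

end RBL

/-- Let `K` be a finite extension of `ℚ` of degree `d` and `f : ℕ≥1 → K`
multiplicative with `F(z) = ∑_{n≥1} f(n) zⁿ` rational in `K(z)`, satisfying
`∑_{i=0}^r P_i(z) F(z)^i = 0` with `P_r ≠ 0`. Then `F = A/B` with `A ∈ K[z]`,
`B ∈ ℚ[z]` nonzero, all complex roots of `B` roots of unity,
`deg B ≤ d!·deg P_r` and `deg A ≤ max_{0≤i≤r−1} deg P_i + (r·d! − 1)·deg P_r`. -/
theorem rational_bound_lemma
    (K : Type*) [Field K] [Algebra ℚ K] [FiniteDimensional ℚ K]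
    (d : ℕ) (hd : Module.finrank ℚ K = d)
    (f : ℕ → K)
    (hf1 : f 1 = 1)
    (hfmul : ∀ m n : ℕ, 0 < m → 0 < n → Nat.Coprime m n → f (m * n) = f m * f n)
    (hrat : ∃ (a b : Polynomial K), b ≠ 0 ∧
      (b : PowerSeries K) * (PowerSeries.mk fun n => if n = 0 then 0 else f n)
        = (a : PowerSeries K))
    (r : ℕ) (P : ℕ → Polynomial K) (hPr : P r ≠ 0)
    (heq : ∑ i ∈ Finset.range (r + 1),
      (P i : PowerSeries K) * (PowerSeries.mk fun n => if n = 0 then 0 else f n) ^ i = 0) :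
    ∃ (A : Polynomial K) (B : Polynomial ℚ), B ≠ 0 ∧
      ((B.map (algebraMap ℚ K) : Polynomial K) : PowerSeries K) *
        (PowerSeries.mk fun n => if n = 0 then 0 else f n) = (A : PowerSeries K) ∧
      (∀ z : ℂ, (B.map (algebraMap ℚ ℂ)).IsRoot z → ∃ m : ℕ, 1 ≤ m ∧ z ^ m = 1) ∧
      B.natDegree ≤ Nat.factorial d * (P r).natDegree ∧
      A.natDegree ≤ (Finset.range r).sup (fun i => (P i).natDegree) +
        (r * Nat.factorial d - 1) * (P r).natDegree := by
  classical
  open Polynomial in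
  haveI hKchar : CharZero K := charZero_of_injective_algebraMap (algebraMap ℚ K).injective
  set F : PowerSeries K := PowerSeries.mk fun n => if n = 0 then 0 else f n with hFdef
  have hF1 : PowerSeries.coeff 1 F = 1 := by
    rw [hFdef, PowerSeries.coeff_mk]
    simp [hf1]
  have hC0 : PowerSeries.constantCoeff F = 0 := by
    rw [hFdef, ← PowerSeries.coeff_zero_eq_constantCoeff_apply, PowerSeries.coeff_mk]
    simp
  obtain ⟨a₀, b₀, hmon, hcop, hab₀, ha₀ne, hb₀c0, hbPr, j, hjr, hPjne, haPj⟩ :=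
    RBL.reduce K F hF1 hC0 hrat r P hPr heq
  -- move to the algebraic closure
  set ι : K →+* AlgebraicClosure K := algebraMap K (AlgebraicClosure K) with hι
  haveI hΩchar : CharZero (AlgebraicClosure K) := charZero_of_injective_algebraMap ι.injective
  set FΩ := PowerSeries.map ι F with hFΩ
  have hcoemap : ∀ q : Polynomial K,
      PowerSeries.map ι (q : PowerSeries K) = ((q.map ι : Polynomial (AlgebraicClosure K)) :
        PowerSeries (AlgebraicClosure K)) := by
    intro q
    ext n
    rw [PowerSeries.coeff_map, Polynomial.coeff_coe, Polynomial.coeff_coe, Polynomial.coeff_map]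
  have habΩ : ((b₀.map ι : Polynomial (AlgebraicClosure K)) : PowerSeries (AlgebraicClosure K)) * FΩ
      = ((a₀.map ι : Polynomial (AlgebraicClosure K)) : PowerSeries (AlgebraicClosure K)) := by
    have h := congrArg (PowerSeries.map ι) hab₀
    rw [map_mul, hcoemap, hcoemap] at h
    exact h
  have hb₀Ωne : b₀.map ι ≠ 0 := Polynomial.map_ne_zero hmon.ne_zero
  set R := (b₀.map ι).roots with hR
  have hroots0 : ∀ ζ ∈ R, ζ ≠ 0 := by
    intro ζ hζ hz
    have hr : (b₀.map ι).IsRoot ζ := (Polynomial.mem_roots hb₀Ωne).mp hζ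
    subst hz
    have h1 : (b₀.map ι).coeff 0 = 0 := by
      rw [Polynomial.coeff_zero_eq_eval_zero]
      exact hr
    rw [Polynomial.coeff_map] at h1
    apply hb₀c0
    apply ι.injective
    rw [h1, map_zero]
  have hsplit : b₀.map ι = (R.map (fun ζ => X - C ζ)).prod :=
    (IsAlgClosed.splits (b₀.map ι)).eq_prod_roots_of_monic (hmon.map ι)
  set L := R.map (fun ζ : AlgebraicClosure K => ζ⁻¹) with hL
  have hLne : ∀ α ∈ L, α ≠ 0 := by
    intro α hα
    obtain ⟨ζ, hζ, rfl⟩ := Multiset.mem_map.mp hα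
    exact inv_ne_zero (hroots0 ζ hζ)
  set u : AlgebraicClosure K := (R.map (fun ζ => -ζ)).prod with hu
  have hune : u ≠ 0 := by
    rw [hu]
    apply Multiset.prod_ne_zero
    intro h0mem
    obtain ⟨ζ, hζ, hz⟩ := Multiset.mem_map.mp h0mem
    exact hroots0 ζ hζ (neg_eq_zero.mp hz)
  have hfactored : b₀.map ι = C u * (L.map (fun α => (1 : Polynomial (AlgebraicClosure K)) - C α * X)).prod := by
    rw [hsplit]
    have hcong : R.map (fun ζ => X - C ζ)
        = R.map (fun ζ => C (-ζ) * (1 - C ζ⁻¹ * X)) := by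
      apply Multiset.map_congr rfl
      intro ζ hζ
      have hζ0 := hroots0 ζ hζ
      have h2 : C (-ζ) * ((1 : Polynomial (AlgebraicClosure K)) - C ζ⁻¹ * X)
          = C (-ζ) - C (-ζ * ζ⁻¹) * X := by
        rw [Polynomial.C_mul]; ring
      have h3 : -ζ * ζ⁻¹ = -1 := by field_simp
      rw [h2, h3, map_neg, map_neg, Polynomial.C_1]
      ring
    rw [hcong, Multiset.prod_map_mul]
    congr 1
    · rw [hu]
      rw [show (fun ζ : AlgebraicClosure K => C (-ζ))
          = (fun x : AlgebraicClosure K => C x) ∘ (fun ζ : AlgebraicClosure K => -ζ) from rfl]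
      rw [← Multiset.map_map]
      exact (map_multiset_prod (Polynomial.C : AlgebraicClosure K →+* Polynomial (AlgebraicClosure K)) _).symm
    · rw [hL, Multiset.map_map]
      rfl
  have hpolyu : C u⁻¹ * (C u * (L.map (fun α => (1 : Polynomial (AlgebraicClosure K)) - C α * X)).prod)
      = (L.map (fun α => (1 : Polynomial (AlgebraicClosure K)) - C α * X)).prod := by
    rw [← mul_assoc, ← Polynomial.C_mul, inv_mul_cancel₀ hune, Polynomial.C_1, one_mul]
  have hLprod : (((L.map (fun α => (1 : Polynomial (AlgebraicClosure K)) - C α * X)).prod :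
        Polynomial (AlgebraicClosure K)) : PowerSeries (AlgebraicClosure K)) * FΩ
      = ((C u⁻¹ * a₀.map ι : Polynomial (AlgebraicClosure K)) : PowerSeries (AlgebraicClosure K)) := by
    calc (((L.map (fun α => (1 : Polynomial (AlgebraicClosure K)) - C α * X)).prod :
          Polynomial (AlgebraicClosure K)) : PowerSeries (AlgebraicClosure K)) * FΩ
        = ((C u⁻¹ * (C u * (L.map (fun α => (1 : Polynomial (AlgebraicClosure K)) - C α * X)).prod) :
            Polynomial (AlgebraicClosure K)) : PowerSeries (AlgebraicClosure K)) * FΩ := by rw [hpolyu]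
      _ = ((C u⁻¹ : Polynomial (AlgebraicClosure K)) : PowerSeries (AlgebraicClosure K)) *
            (((C u * (L.map (fun α => (1 : Polynomial (AlgebraicClosure K)) - C α * X)).prod :
              Polynomial (AlgebraicClosure K)) : PowerSeries (AlgebraicClosure K)) * FΩ) := by
            rw [Polynomial.coe_mul]; ring
      _ = ((C u⁻¹ : Polynomial (AlgebraicClosure K)) : PowerSeries (AlgebraicClosure K)) *
            (((b₀.map ι : Polynomial (AlgebraicClosure K)) : PowerSeries (AlgebraicClosure K)) * FΩ) := by
            rw [← hfactored]
      _ = ((C u⁻¹ : Polynomial (AlgebraicClosure K)) : PowerSeries (AlgebraicClosure K)) *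
            ((a₀.map ι : Polynomial (AlgebraicClosure K)) : PowerSeries (AlgebraicClosure K)) := by
            rw [habΩ]
      _ = ((C u⁻¹ * a₀.map ι : Polynomial (AlgebraicClosure K)) : PowerSeries (AlgebraicClosure K)) := by
            rw [Polynomial.coe_mul]
  obtain ⟨T, p, N, h0, hrepF⟩ := RBL.exprep L FΩ (C u⁻¹ * a₀.map ι) hLne hLprod
  set f' : ℕ → AlgebraicClosure K := fun n => ι (f n) with hf'
  set N' := max N 1 with hN'
  set T' := T.filter (fun β => p β ≠ 0) with hT'
  have hcoeffΩ : ∀ n : ℕ, 1 ≤ n → PowerSeries.coeff n FΩ = f' n := by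
    intro n hn
    rw [hFΩ, PowerSeries.coeff_map, hFdef, PowerSeries.coeff_mk, if_neg (by omega)]
  have hrepf : ∀ n, N' ≤ n → f' n = ∑ β ∈ T', (p β).eval (n : AlgebraicClosure K) * β ^ n := by
    intro n hn
    rw [← hcoeffΩ n (le_trans (le_max_right _ _) hn), hrepF n (le_trans (le_max_left _ _) hn)]
    rw [hT']
    symm
    apply Finset.sum_filter_of_ne
    intro β hβ hne
    intro hpz
    apply hne
    rw [hpz]
    simp
  have hmul' : ∀ q n : ℕ, Nat.Prime q → ¬ q ∣ n → f' (q * n) = f' q * f' n := by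
    intro q n hq hdvd
    have hn0 : 0 < n := by
      rcases Nat.eq_zero_or_pos n with h | h
      · subst h
        exact absurd (dvd_zero q) hdvd
      · exact h
    rw [hf']
    simp only
    rw [hfmul q n hq.pos hn0 ((Nat.Prime.coprime_iff_not_dvd hq).mpr hdvd), map_mul]
  have hru : ∀ β ∈ T', ∃ m : ℕ, 1 ≤ m ∧ β ^ m = 1 :=
    RBL.core f' hmul' T' (fun β hβ => h0 β (Finset.mem_filter.mp hβ).1) p
      (fun β hβ => (Finset.mem_filter.mp hβ).2) N' hrepf
  -- annihilator
  set c : Polynomial (AlgebraicClosure K) := ∏ β ∈ T', (1 - C β * X) ^ ((p β).natDegree + 1) with hc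
  have hcF : ∃ e : Polynomial (AlgebraicClosure K),
      (c : PowerSeries (AlgebraicClosure K)) * FΩ = (e : PowerSeries (AlgebraicClosure K)) := by
    set S : PowerSeries (AlgebraicClosure K) :=
      ∑ β ∈ T', PowerSeries.mk (fun n => (p β).eval (n : AlgebraicClosure K) * β ^ n) with hS
    have htail : ∀ n, N' ≤ n → PowerSeries.coeff n (FΩ - S) = 0 := by
      intro n hn
      rw [map_sub, hcoeffΩ n (le_trans (le_max_right _ _) hn), hrepf n hn, hS, map_sum]
      rw [Finset.sum_congr rfl (fun β _ => PowerSeries.coeff_mk n _)]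
      exact sub_self _
    obtain ⟨t₀, ht₀⟩ := RBL.eventually_poly (FΩ - S) N' htail
    have hterm : ∀ β ∈ T', ∃ eβ : Polynomial (AlgebraicClosure K),
        (c : PowerSeries (AlgebraicClosure K)) *
          PowerSeries.mk (fun n => (p β).eval (n : AlgebraicClosure K) * β ^ n)
          = (eβ : PowerSeries (AlgebraicClosure K)) := by
      intro β hβ
      obtain ⟨e₁, he₁⟩ := RBL.annih β (p β)
      refine ⟨(∏ γ ∈ T'.erase β, (1 - C γ * X) ^ ((p γ).natDegree + 1)) * e₁, ?_⟩
      have hcsplit : c = (1 - C β * X) ^ ((p β).natDegree + 1) *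
          ∏ γ ∈ T'.erase β, (1 - C γ * X) ^ ((p γ).natDegree + 1) :=
        (Finset.mul_prod_erase T' _ hβ).symm
      rw [hcsplit, Polynomial.coe_mul, Polynomial.coe_mul]
      rw [mul_comm ((((1 - C β * X) ^ ((p β).natDegree + 1) : Polynomial (AlgebraicClosure K)) :
        PowerSeries (AlgebraicClosure K))) _, mul_assoc, he₁]
    have hsumpoly : ∀ s : Finset (AlgebraicClosure K), s ⊆ T' →
        ∃ e : Polynomial (AlgebraicClosure K),
          (c : PowerSeries (AlgebraicClosure K)) *
            (∑ β ∈ s, PowerSeries.mk (fun n => (p β).eval (n : AlgebraicClosure K) * β ^ n))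
            = (e : PowerSeries (AlgebraicClosure K)) := by
      intro s
      induction s using Finset.induction with
      | empty =>
        intro _
        refine ⟨0, ?_⟩
        rw [Finset.sum_empty, mul_zero, Polynomial.coe_zero]
      | @insert β s hβs IH' =>
        intro hs
        obtain ⟨e₂, he₂⟩ := IH' (Finset.insert_subset_iff.mp hs).2
        obtain ⟨e₁, he₁⟩ := hterm β (Finset.insert_subset_iff.mp hs).1
        refine ⟨e₁ + e₂, ?_⟩
        rw [Finset.sum_insert hβs, mul_add, he₁, he₂, Polynomial.coe_add]
    obtain ⟨e₂, he₂⟩ := hsumpoly T' subset_rfl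
    refine ⟨c * t₀ + e₂, ?_⟩
    have hdecomp : FΩ = (FΩ - S) + S := by ring
    rw [hdecomp, mul_add, ← ht₀, ← Polynomial.coe_mul, hS] at *
    rw [he₂, ← Polynomial.coe_add]
  -- divisibility b₀Ω ∣ c
  have hcopΩ : IsCoprime (a₀.map ι) (b₀.map ι) := by
    have h := hcop.map (Polynomial.mapRingHom ι)
    simpa using h
  obtain ⟨e, he⟩ := hcF
  have hdvdc : b₀.map ι ∣ c := by
    have hpoly : c * (a₀.map ι) = (b₀.map ι) * e := by
      apply Polynomial.coe_inj.mp
      rw [Polynomial.coe_mul, Polynomial.coe_mul, ← he, ← habΩ]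
      ring
    exact (hcopΩ.symm).dvd_of_dvd_mul_right ⟨e, hpoly⟩
  -- all roots of b₀ are roots of unity
  have hrootsb : ∀ ζ : AlgebraicClosure K, (b₀.map ι).IsRoot ζ → ∃ m : ℕ, 1 ≤ m ∧ ζ ^ m = 1 := by
    intro ζ hζ
    have hcζ : c.eval ζ = 0 := Polynomial.IsRoot.dvd hζ hdvdc
    rw [hc, Polynomial.eval_prod] at hcζ
    obtain ⟨β, hβ, hβz⟩ := Finset.prod_eq_zero_iff.mp hcζ
    rw [Polynomial.eval_pow] at hβz
    have h1 : ((1 : Polynomial (AlgebraicClosure K)) - C β * X).eval ζ = 0 :=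
      (pow_eq_zero_iff (by omega)).mp hβz
    simp only [Polynomial.eval_sub, Polynomial.eval_mul, Polynomial.eval_C,
      Polynomial.eval_X, Polynomial.eval_one] at h1
    have hβ0 : β ≠ 0 := h0 β (Finset.mem_filter.mp hβ).1
    have hbz : β * ζ = 1 := by linear_combination -h1
    have hζβ : ζ = β⁻¹ := eq_inv_of_mul_eq_one_right hbz
    obtain ⟨m, hm1, hm⟩ := hru β hβ
    exact ⟨m, hm1, by rw [hζβ, inv_pow, hm, inv_one]⟩
  -- lift to ℚ
  obtain ⟨B, hBmon, hBdvd, hBroots, hBdeg⟩ := RBL.lift K b₀ hmon hrootsb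
  obtain ⟨w, hw⟩ := hBdvd
  have hwne : w ≠ 0 := by
    intro h
    rw [h, mul_zero] at hw
    exact (Polynomial.map_ne_zero hBmon.ne_zero) hw
  refine ⟨a₀ * w, B, hBmon.ne_zero, ?_, hBroots, ?_, ?_⟩
  · rw [hw, Polynomial.coe_mul, Polynomial.coe_mul]
    rw [mul_comm ((b₀ : PowerSeries K)) ((w : PowerSeries K)), mul_assoc, hab₀]
    ring
  · have hbPrdeg : b₀.natDegree ≤ (P r).natDegree := Polynomial.natDegree_le_of_dvd hbPr hPr
    calc B.natDegree ≤ Module.finrank ℚ K * b₀.natDegree := hBdeg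
      _ = d * b₀.natDegree := by rw [hd]
      _ ≤ d * (P r).natDegree := Nat.mul_le_mul_left d hbPrdeg
      _ ≤ Nat.factorial d * (P r).natDegree := Nat.mul_le_mul_right _ (Nat.self_le_factorial d)
  · have hd1 : 1 ≤ d := by
      rw [← hd]
      exact Module.finrank_pos
    have hbPrdeg : b₀.natDegree ≤ (P r).natDegree := Polynomial.natDegree_le_of_dvd hbPr hPr
    have hBmapdeg : (B.map (algebraMap ℚ K)).natDegree = B.natDegree :=
      Polynomial.natDegree_map_eq_of_injective (algebraMap ℚ K).injective B
    have hdegsum : B.natDegree = b₀.natDegree + w.natDegree := by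
      rw [← hBmapdeg, hw, Polynomial.natDegree_mul hmon.ne_zero hwne]
    have hBd2 : B.natDegree ≤ d * b₀.natDegree := by
      rw [← hd]
      exact hBdeg
    have hAdeg : (a₀ * w).natDegree = a₀.natDegree + w.natDegree :=
      Polynomial.natDegree_mul ha₀ne hwne
    have haPdeg : a₀.natDegree ≤ (Finset.range r).sup (fun i => (P i).natDegree) :=
      le_trans (Polynomial.natDegree_le_of_dvd haPj hPjne)
        (Finset.le_sup (f := fun i => (P i).natDegree) (Finset.mem_range.mpr hjr))
    have h2 : w.natDegree ≤ (d - 1) * b₀.natDegree := by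
      rw [Nat.sub_one_mul]
      omega
    have h3 : (d - 1) * b₀.natDegree ≤ (d - 1) * (P r).natDegree :=
      Nat.mul_le_mul_left _ hbPrdeg
    have h4 : (d - 1) * (P r).natDegree ≤ (r * Nat.factorial d - 1) * (P r).natDegree := by
      apply Nat.mul_le_mul_right
      have h5 : d ≤ Nat.factorial d := Nat.self_le_factorial d
      have h6 : Nat.factorial d ≤ r * Nat.factorial d :=
        Nat.le_mul_of_pos_left _ (by omega)
      omega
    omega
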